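/- For each a > 1 and υ > 0 there exists p₁ > 0 such that for every p ≥ p₁ there exists μ_c ∈ ℝ and two distinct points ȳ₁ ≠ ȳ₂ in ℝ that are both global maximum points of the function y ↦ E(y,p,μ_c), i.e. E(ȳ₁,p,μ_c) = E(ȳ₂,p,μ_c) ≥ E(y,p,μ_c) for all y ∈ ℝ. (This is the existence of a phase coexistence point on each line {(p,μ) : μ ∈ ℝ} with p ≥ p₁.) -/

import Mathlib

set_option maxHeartbeats 1000000

/-- The single-cell partition function `K(y,p,μ)` with cell volume `υ` and ratio `a`. -/
noncomputable def K (υ a y p μ : ℝ) : ℝ :=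
  ∑' n : ℕ, (υ ^ n / (Nat.factorial n : ℝ)) *
    Real.exp ((y + μ) * n - (a * p / 2) * (n : ℝ) ^ 2)

/-- The function `E(y,p,μ) = -y²/(2p) + ln K(y,p,μ)`. -/
noncomputable def E (υ a y p μ : ℝ) : ℝ :=
  -(y ^ 2) / (2 * p) + Real.log (K υ a y p μ)

namespace PC
open Real Filter


open Real

/-- the n-th term of K as a function of x = y + μ -/
noncomputable def trm (υ a p x : ℝ) (n : ℕ) : ℝ :=
  υ ^ n / (Nat.factorial n : ℝ) * Real.exp (x * n - (a * p / 2) * (n : ℝ) ^ 2)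

noncomputable def gK (υ a p x : ℝ) : ℝ := ∑' n : ℕ, trm υ a p x n

lemma K_eq (υ a y p μ : ℝ) : K υ a y p μ = gK υ a p (y + μ) := rfl

lemma trm_nonneg {υ : ℝ} (hυ : 0 < υ) (a p x : ℝ) (n : ℕ) : 0 ≤ trm υ a p x n := by
  unfold trm; positivity

lemma trm_pos {υ : ℝ} (hυ : 0 < υ) (a p x : ℝ) (n : ℕ) : 0 < trm υ a p x n := by
  unfold trm
  have h1 : (0:ℝ) < (Nat.factorial n : ℝ) := by exact_mod_cast Nat.factorial_pos n
  positivity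

lemma summable_trm {υ a p : ℝ} (hυ : 0 < υ) (ha : 0 < a) (hp : 0 < p) (x : ℝ) :
    Summable (trm υ a p x) := by
  refine Summable.of_nonneg_of_le (fun n => trm_nonneg hυ a p x n) (fun n => ?_)
    (Real.summable_pow_div_factorial (υ * Real.exp x))
  unfold trm
  have h1 : Real.exp (x * n - (a * p / 2) * (n:ℝ)^2) ≤ Real.exp (x * n) := by
    apply Real.exp_le_exp.2
    have : (0:ℝ) ≤ (a * p / 2) * (n:ℝ)^2 := by positivity
    linarith
  have h2 : Real.exp (x * n) = (Real.exp x) ^ n := by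
    rw [mul_comm, Real.exp_nat_mul]
  have h3 : (υ * Real.exp x) ^ n / (n.factorial : ℝ)
      = υ ^ n / (n.factorial : ℝ) * (Real.exp x) ^ n := by
    rw [mul_pow]; ring
  rw [h3]
  have h4 : (0:ℝ) ≤ υ ^ n / (n.factorial : ℝ) := by positivity
  calc υ ^ n / (n.factorial : ℝ) * Real.exp (x * n - (a * p / 2) * (n:ℝ)^2)
      ≤ υ ^ n / (n.factorial : ℝ) * Real.exp (x * n) := by
        exact mul_le_mul_of_nonneg_left h1 h4
    _ = υ ^ n / (n.factorial : ℝ) * (Real.exp x) ^ n := by rw [h2]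

lemma one_le_gK {υ a p : ℝ} (hυ : 0 < υ) (ha : 0 < a) (hp : 0 < p) (x : ℝ) :
    1 ≤ gK υ a p x := by
  have h0 : trm υ a p x 0 = 1 := by simp [trm]
  have := Summable.le_tsum (summable_trm hυ ha hp x) 0 (fun j _ => trm_nonneg hυ a p x j)
  rw [h0] at this
  exact this

lemma gK_pos {υ a p : ℝ} (hυ : 0 < υ) (ha : 0 < a) (hp : 0 < p) (x : ℝ) :
    0 < gK υ a p x := lt_of_lt_of_le one_pos (one_le_gK hυ ha hp x)

lemma continuous_gK {υ a p : ℝ} (hυ : 0 < υ) (ha : 0 < a) (hp : 0 < p) :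
    Continuous (gK υ a p) := by
  rw [continuous_iff_continuousAt]
  intro x₀
  have hopen : Set.Ioo (x₀ - 1) (x₀ + 1) ∈ nhds x₀ := by
    apply Ioo_mem_nhds <;> linarith
  apply ContinuousOn.continuousAt _ hopen
  apply continuousOn_tsum (u := fun n => (υ * Real.exp (x₀ + 1)) ^ n / (n.factorial : ℝ))
  · intro n
    apply Continuous.continuousOn
    unfold trm
    fun_prop
  · exact Real.summable_pow_div_factorial _
  · intro n x hx
    have hxle : x ≤ x₀ + 1 := (hx.2).le
    have h1 : Real.exp (x * n - (a * p / 2) * (n:ℝ)^2) ≤ Real.exp ((x₀ + 1) * n) := by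
      apply Real.exp_le_exp.2
      have h2 : (0:ℝ) ≤ (a * p / 2) * (n:ℝ)^2 := by positivity
      have h3 : x * n ≤ (x₀ + 1) * n := by
        apply mul_le_mul_of_nonneg_right hxle (Nat.cast_nonneg n)
      linarith
    have h4 : ‖trm υ a p x n‖ = trm υ a p x n := by
      rw [Real.norm_eq_abs, abs_of_nonneg (trm_nonneg hυ a p x n)]
    rw [h4]
    unfold trm
    have h5 : (υ * Real.exp (x₀+1)) ^ n / (n.factorial : ℝ)
        = υ ^ n / (n.factorial : ℝ) * (Real.exp (x₀+1)) ^ n := by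
      rw [mul_pow]; ring
    rw [h5, ← Real.exp_nat_mul, mul_comm (n:ℝ) (x₀+1)]
    have h4' : (0:ℝ) ≤ υ ^ n / (n.factorial : ℝ) := by positivity
    exact mul_le_mul_of_nonneg_left h1 h4'


/-- exponent of effective weight: `B t n = h n - (t - n p)²/(2p)` -/
noncomputable def B (υ a p μ t : ℝ) (n : ℕ) : ℝ :=
  n * μ + n * Real.log υ - Real.log (Nat.factorial n : ℝ)
    - ((a - 1) * p / 2) * (n : ℝ) ^ 2 - (t - n * p) ^ 2 / (2 * p)

lemma expB_eq_trm {υ a p : ℝ} (hυ : 0 < υ) (hp : 0 < p) (μ t : ℝ) (n : ℕ) :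
    Real.exp (B υ a p μ t n) = Real.exp (-(t^2)/(2*p)) * trm υ a p (t + μ) n := by
  unfold B trm
  have hf : (0:ℝ) < (Nat.factorial n : ℝ) := by exact_mod_cast Nat.factorial_pos n
  have h3 : υ ^ n / (Nat.factorial n : ℝ)
      = Real.exp (n * Real.log υ - Real.log (Nat.factorial n : ℝ)) := by
    rw [Real.exp_sub, Real.exp_nat_mul, Real.exp_log hυ, Real.exp_log hf]
  rw [h3, ← Real.exp_add, ← Real.exp_add]
  congr 1
  have hp' : p ≠ 0 := ne_of_gt hp
  field_simp
  ring

lemma summable_expB {υ a p : ℝ} (hυ : 0 < υ) (ha : 0 < a) (hp : 0 < p) (μ t : ℝ) :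
    Summable (fun n => Real.exp (B υ a p μ t n)) := by
  have : (fun n => Real.exp (B υ a p μ t n))
      = fun n => Real.exp (-(t^2)/(2*p)) * trm υ a p (t + μ) n := by
    funext n; exact expB_eq_trm hυ hp μ t n
  rw [this]
  exact (summable_trm hυ ha hp (t + μ)).mul_left _

lemma expE_eq {υ a p : ℝ} (hυ : 0 < υ) (ha : 0 < a) (hp : 0 < p) (μ t : ℝ) :
    Real.exp (E υ a t p μ) = ∑' n : ℕ, Real.exp (B υ a p μ t n) := by
  have h1 : Real.exp (E υ a t p μ)
      = Real.exp (-(t^2)/(2*p)) * gK υ a p (t + μ) := by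
    rw [E, Real.exp_add, K_eq, Real.exp_log (gK_pos hυ ha hp _)]
  rw [h1]
  rw [show (∑' n : ℕ, Real.exp (B υ a p μ t n))
      = ∑' n : ℕ, Real.exp (-(t^2)/(2*p)) * trm υ a p (t + μ) n from
    tsum_congr (fun n => expB_eq_trm hυ hp μ t n)]
  rw [tsum_mul_left]
  rfl

/-- single term below exp E -/
lemma expB_le_expE {υ a p : ℝ} (hυ : 0 < υ) (ha : 0 < a) (hp : 0 < p) (μ t : ℝ) (n : ℕ) :
    Real.exp (B υ a p μ t n) ≤ Real.exp (E υ a t p μ) := by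
  rw [expE_eq hυ ha hp]
  exact Summable.le_tsum (summable_expB hυ ha hp μ t) n
    (fun j _ => (Real.exp_pos _).le)

/-- the "phase value" h n = B (n p) n is below exp E(np). -/
lemma exph_le {υ a p : ℝ} (hυ : 0 < υ) (ha : 0 < a) (hp : 0 < p) (μ : ℝ) (n : ℕ) :
    Real.exp (B υ a p μ ((n : ℝ) * p) n) ≤ Real.exp (E υ a ((n:ℝ)*p) p μ) :=
  expB_le_expE hυ ha hp μ _ n


noncomputable def C0 (υ : ℝ) : ℝ := ∑' n : ℕ, υ ^ n / (Nat.factorial n : ℝ)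

lemma summable_C0 {υ : ℝ} (hυ : 0 < υ) :
    Summable (fun n : ℕ => υ ^ n / (Nat.factorial n : ℝ)) :=
  Real.summable_pow_div_factorial υ

lemma one_le_C0 {υ : ℝ} (hυ : 0 < υ) : 1 ≤ C0 υ := by
  have h := Summable.le_tsum (summable_C0 hυ) 0 (fun j _ => by positivity)
  simpa [C0] using h

lemma log_C0_nonneg {υ : ℝ} (hυ : 0 < υ) : 0 ≤ Real.log (C0 υ) :=
  Real.log_nonneg (one_le_C0 hυ)

lemma gK_le {υ a p : ℝ} (hυ : 0 < υ) (ha : 0 < a) (hp : 0 < p) (x : ℝ) :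
    gK υ a p x ≤ C0 υ * Real.exp (x^2 / (2*a*p)) := by
  have hsum2 : Summable (fun n : ℕ => υ ^ n / (Nat.factorial n : ℝ) * Real.exp (x^2/(2*a*p))) :=
    (summable_C0 hυ).mul_right _
  have h := Summable.tsum_le_tsum (f := trm υ a p x)
    (g := fun n : ℕ => υ ^ n / (Nat.factorial n : ℝ) * Real.exp (x^2/(2*a*p)))
    (fun n => ?_) (summable_trm hυ ha hp x) hsum2
  · rw [tsum_mul_right] at h
    exact h
  · unfold trm
    have hexp : Real.exp (x * n - (a * p / 2) * (n:ℝ)^2) ≤ Real.exp (x^2/(2*a*p)) := by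
      apply Real.exp_le_exp.2
      rw [le_div_iff₀ (by positivity : (0:ℝ) < 2*a*p)]
      nlinarith [sq_nonneg (x - a*p*(n:ℝ))]
    have : (0:ℝ) ≤ υ ^ n / (Nat.factorial n : ℝ) := by positivity
    exact mul_le_mul_of_nonneg_left hexp this

lemma E_le {υ a p : ℝ} (hυ : 0 < υ) (ha : 0 < a) (hp : 0 < p) (y μ : ℝ) :
    E υ a y p μ ≤ Real.log (C0 υ) + (y+μ)^2/(2*a*p) - y^2/(2*p) := by
  have h1 : Real.log (gK υ a p (y+μ)) ≤ Real.log (C0 υ * Real.exp ((y+μ)^2/(2*a*p))) :=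
    Real.log_le_log (gK_pos hυ ha hp _) (gK_le hυ ha hp _)
  have hC0 : (0:ℝ) < C0 υ := lt_of_lt_of_le one_pos (one_le_C0 hυ)
  rw [Real.log_mul (ne_of_gt hC0) (ne_of_gt (Real.exp_pos _)), Real.log_exp] at h1
  rw [E, K_eq, neg_div]
  linarith

lemma E_zero_nonneg {υ a p : ℝ} (hυ : 0 < υ) (ha : 0 < a) (hp : 0 < p) (μ : ℝ) :
    0 ≤ E υ a 0 p μ := by
  rw [E, K_eq]
  have h := Real.log_nonneg (one_le_gK hυ ha hp (0 + μ))
  have h2 : -((0:ℝ)^2)/(2*p) = 0 := by norm_num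
  rw [h2]
  linarith

noncomputable def Bd (υ a p : ℝ) (m : ℝ) : ℝ :=
  (2*a*p*Real.log (C0 υ) + m + 2*m/(a-1)) * (2/(a-1))

lemma sq_le_Bd {υ a p : ℝ} (hυ : 0 < υ) (ha : 1 < a) (hp : 0 < p) {y μ : ℝ}
    (hE : 0 ≤ E υ a y p μ) : y^2 ≤ Bd υ a p (μ^2) := by
  have ha0 : (0:ℝ) < a := by linarith
  have ha1 : (0:ℝ) < a - 1 := by linarith
  have h1 := E_le hυ ha0 hp y μ
  have h2 : 0 ≤ Real.log (C0 υ) + (y+μ)^2/(2*a*p) - y^2/(2*p) := le_trans hE h1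
  have h3 : a * y^2 - (y+μ)^2 ≤ 2*a*p*Real.log (C0 υ) := by
    have hap : (0:ℝ) < 2*a*p := by positivity
    have h4 : (y+μ)^2/(2*a*p) - y^2/(2*p) ≥ -Real.log (C0 υ) := by linarith
    have h5 : ((y+μ)^2 - a*y^2)/(2*a*p) ≥ -Real.log (C0 υ) := by
      have : ((y+μ)^2 - a*y^2)/(2*a*p) = (y+μ)^2/(2*a*p) - y^2/(2*p) := by
        field_simp
      linarith [this ▸ h4]
    rw [ge_iff_le, le_div_iff₀ hap] at h5
    nlinarith [h5]
  have h2ym : 2*y*μ ≤ (a-1)/2*y^2 + 2*μ^2/(a-1) := by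
    rw [← sub_nonneg]
    have heq : (a-1)/2*y^2 + 2*μ^2/(a-1) - 2*y*μ = ((a-1)*y - 2*μ)^2/(2*(a-1)) := by
      field_simp; ring
    rw [heq]; positivity
  have h6 : (a-1)/2 * y^2 ≤ 2*a*p*Real.log (C0 υ) + μ^2 + 2*μ^2/(a-1) := by nlinarith
  rw [Bd]
  rw [← sub_nonneg]
  have heq2 : (2*a*p*Real.log (C0 υ) + μ^2 + 2*μ^2/(a-1)) * (2/(a-1)) - y^2
      = (2*a*p*Real.log (C0 υ) + μ^2 + 2*μ^2/(a-1) - (a-1)/2*y^2) * (2/(a-1)) := by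
    field_simp
  rw [heq2]
  have : (0:ℝ) ≤ 2/(a-1) := by positivity
  apply mul_nonneg _ this
  linarith

lemma Bd_nonneg {υ a p : ℝ} (hυ : 0 < υ) (ha : 1 < a) (hp : 0 < p) {m : ℝ} (hm : 0 ≤ m) :
    0 ≤ Bd υ a p m := by
  have ha1 : (0:ℝ) < a - 1 := by linarith
  have h1 := log_C0_nonneg hυ
  have : (0:ℝ) ≤ 2*a*p*Real.log (C0 υ) := by positivity
  have h2 : (0:ℝ) ≤ 2*m/(a-1) := by positivity
  have h3 : (0:ℝ) ≤ 2/(a-1) := by positivity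
  apply mul_nonneg _ h3
  linarith

lemma Bd_mono {υ a p : ℝ} (hυ : 0 < υ) (ha : 1 < a) (hp : 0 < p) {m m' : ℝ}
    (h : m ≤ m') : Bd υ a p m ≤ Bd υ a p m' := by
  have ha1 : (0:ℝ) < a - 1 := by linarith
  rw [Bd, Bd]
  have h3 : (0:ℝ) ≤ 2/(a-1) := by positivity
  apply mul_le_mul_of_nonneg_right _ h3
  have : 2*m/(a-1) ≤ 2*m'/(a-1) := (div_le_div_iff_of_pos_right ha1).2 (by linarith)
  linarith

lemma continuous_E2 {υ a p : ℝ} (hυ : 0 < υ) (ha : 0 < a) (hp : 0 < p) :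
    Continuous (fun z : ℝ × ℝ => E υ a z.1 p z.2) := by
  have h1 : (fun z : ℝ × ℝ => E υ a z.1 p z.2)
      = fun z : ℝ × ℝ => -(z.1^2)/(2*p) + Real.log (gK υ a p (z.1 + z.2)) := by
    funext z; rw [E, K_eq]
  rw [h1]
  apply Continuous.add
  · fun_prop
  · apply Continuous.log
    · exact (continuous_gK hυ ha hp).comp (continuous_fst.add continuous_snd)
    · intro z; exact ne_of_gt (gK_pos hυ ha hp _)

lemma continuous_E {υ a p : ℝ} (hυ : 0 < υ) (ha : 0 < a) (hp : 0 < p) (μ : ℝ) :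
    Continuous (fun y : ℝ => E υ a y p μ) :=
  (continuous_E2 hυ ha hp).comp (continuous_id.prodMk continuous_const)

lemma exists_max {υ a p : ℝ} (hυ : 0 < υ) (ha : 1 < a) (hp : 0 < p) (μ : ℝ) :
    ∃ t : ℝ, ∀ y : ℝ, E υ a y p μ ≤ E υ a t p μ := by
  have ha0 : (0:ℝ) < a := by linarith
  set R := Real.sqrt (Bd υ a p (μ^2)) with hR
  have hR0 : 0 ≤ R := Real.sqrt_nonneg _
  have h0mem : (0:ℝ) ∈ Set.Icc (-R) R := by constructor <;> linarith
  obtain ⟨t, htmem, htmax⟩ := (isCompact_Icc (a := -R) (b := R)).exists_isMaxOn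
    ⟨0, h0mem⟩ ((continuous_E hυ ha0 hp μ).continuousOn)
  refine ⟨t, fun y => ?_⟩
  by_cases hy : y ∈ Set.Icc (-R) R
  · exact htmax hy
  · have hy' : R < |y| := by
      rcases abs_cases y with ⟨h1, _⟩ | ⟨h1, _⟩ <;>
        (simp only [Set.mem_Icc, not_and_or, not_le] at hy; rcases hy with h | h <;> linarith)
    have hysq : Bd υ a p (μ^2) < y^2 := by
      have h2 : R^2 < |y|^2 := by
        apply pow_lt_pow_left₀ hy' hR0
        norm_num
      rw [sq_abs] at h2
      rw [hR] at h2
      rwa [Real.sq_sqrt (Bd_nonneg hυ ha hp (sq_nonneg μ))] at h2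
    have hEy : E υ a y p μ < 0 := by
      by_contra hcon
      push_neg at hcon
      exact absurd (sq_le_Bd hυ ha hp hcon) (by linarith)
    apply le_of_lt
    calc E υ a y p μ < 0 := hEy
      _ ≤ E υ a 0 p μ := E_zero_nonneg hυ ha0 hp μ
      _ ≤ E υ a t p μ := htmax h0mem


lemma B_split (υ a p μ t : ℝ) (n : ℕ) :
    B υ a p μ t n = B υ a p μ ((n:ℝ)*p) n - (t - (n:ℝ)*p)^2/(2*p) := by
  unfold B; ring


lemma exp32_le {p : ℝ} (hp : 150 ≤ p) : Real.exp (-(p/32)) ≤ 1/5 := by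
  have h2 := Real.add_one_le_exp (p/32)
  have h1 : (5:ℝ) ≤ Real.exp (p/32) := by linarith
  rw [Real.exp_neg, inv_le_comm₀ (Real.exp_pos _) (by norm_num)]
  linarith

lemma exp4_le {p : ℝ} (hp : 150 ≤ p) : Real.exp (-(p/4)) ≤ 1/2 := by
  have h2 := Real.add_one_le_exp (p/4)
  have h1 : (2:ℝ) ≤ Real.exp (p/4) := by linarith
  rw [Real.exp_neg, inv_le_comm₀ (Real.exp_pos _) (by norm_num)]
  linarith

lemma exp2_le : Real.exp (-2 : ℝ) ≤ 1/3 := by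
  have h2 := Real.add_one_le_exp (2:ℝ)
  have h1 : (3:ℝ) ≤ Real.exp 2 := by linarith
  rw [Real.exp_neg, inv_le_comm₀ (Real.exp_pos _) (by norm_num)]
  linarith

section Regions
variable {υ a p μ t : ℝ}

/-- value of a maximizer dominates all "phase values". -/
lemma hV_ge (hυ : 0 < υ) (ha : 0 < a) (hp : 0 < p)
    (hmax : ∀ y, E υ a y p μ ≤ E υ a t p μ) (n : ℕ) :
    Real.exp (B υ a p μ ((n:ℝ)*p) n) ≤ Real.exp (E υ a t p μ) :=
  le_trans (expB_le_expE hυ ha hp μ ((n:ℝ)*p) n) (Real.exp_le_exp.2 (hmax _))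

lemma hV_one (hυ : 0 < υ) (ha : 0 < a) (hp : 0 < p)
    (hmax : ∀ y, E υ a y p μ ≤ E υ a t p μ) :
    1 ≤ Real.exp (E υ a t p μ) := by
  calc (1:ℝ) = Real.exp 0 := (Real.exp_zero).symm
    _ ≤ Real.exp (E υ a 0 p μ) := Real.exp_le_exp.2 (E_zero_nonneg hυ ha hp μ)
    _ ≤ Real.exp (E υ a t p μ) := Real.exp_le_exp.2 (hmax 0)

/-- master per-term bound using a Gaussian gap `c` -/
lemma exp_B_le (hυ : 0 < υ) (ha : 0 < a) (hp : 0 < p)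
    (hmax : ∀ y, E υ a y p μ ≤ E υ a t p μ) (n : ℕ) {c : ℝ}
    (hc : c ≤ (t - (n:ℝ)*p)^2/(2*p)) :
    Real.exp (B υ a p μ t n) ≤ Real.exp (E υ a t p μ) * Real.exp (-c) := by
  rw [B_split, Real.exp_sub, div_eq_mul_inv]
  have h1 : (Real.exp ((t - (n:ℝ)*p)^2/(2*p)))⁻¹ ≤ Real.exp (-c) := by
    rw [← Real.exp_neg, Real.exp_le_exp]
    linarith
  exact mul_le_mul (hV_ge hυ ha hp hmax n) h1 (by positivity) (Real.exp_nonneg _)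

/-- Gaussian estimate for shifted terms, valid whenever `t ≤ 3p/4`. -/
lemma gauss_tail (hp : 0 < p) (h2 : t ≤ 3*p/4) (n : ℕ) :
    p/32 + n*(p/4) ≤ (t - ((n+1:ℕ):ℝ)*p)^2/(2*p) := by
  rw [le_div_iff₀ (by positivity : (0:ℝ) < 2*p)]
  push_cast
  have hn : (0:ℝ) ≤ (n:ℝ) := Nat.cast_nonneg n
  have h1 : (n:ℝ)*p + p/4 ≤ ((n:ℝ)+1)*p - t := by nlinarith
  have h2' : (0:ℝ) ≤ (n:ℝ)*p + p/4 := by positivity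
  have h3 : ((n:ℝ)*p + p/4)^2 ≤ (((n:ℝ)+1)*p - t)^2 := by
    apply pow_le_pow_left₀ h2' h1
  have h4 : (t - ((n:ℝ)+1)*p)^2 = (((n:ℝ)+1)*p - t)^2 := by ring
  rw [h4]
  nlinarith [sq_nonneg ((n:ℝ)*p)]

lemma gauss_zero (hp : 0 < p) (h1 : p/4 ≤ t) :
    p/32 ≤ (t - ((0:ℕ):ℝ)*p)^2/(2*p) := by
  rw [le_div_iff₀ (by positivity : (0:ℝ) < 2*p)]
  push_cast
  nlinarith

lemma exp_split (hp150 : 150 ≤ p) (n : ℕ) :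
    Real.exp (-(p/32 + n*(p/4))) ≤ (1/5) * (1/2)^n := by
  have h1 : Real.exp (-(p/32 + n*(p/4))) = Real.exp (-(p/32)) * (Real.exp (-(p/4)))^n := by
    rw [← Real.exp_nat_mul, ← Real.exp_add]
    congr 1
    ring
  rw [h1]
  apply mul_le_mul (exp32_le hp150) _ (by positivity) (by norm_num)
  apply pow_le_pow_left₀ (Real.exp_nonneg _) (exp4_le hp150)

/-- no maximizer in the middle region `[p/4, 3p/4]` -/
lemma no_max_middle (hυ : 0 < υ) (ha : 1 < a) (hp : 150 ≤ p)
    (hmax : ∀ y, E υ a y p μ ≤ E υ a t p μ) (h1 : p/4 ≤ t) (h2 : t ≤ 3*p/4) : False := by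
  have ha0 : (0:ℝ) < a := by linarith
  have hp0 : (0:ℝ) < p := by linarith
  have hV1 : 1 ≤ Real.exp (E υ a t p μ) := hV_one hυ ha0 hp0 hmax
  have hexpV : (0:ℝ) < Real.exp (E υ a t p μ) := Real.exp_pos _
  have hsum := summable_expB hυ ha0 hp0 μ t
  have hsplit : Real.exp (E υ a t p μ)
      = Real.exp (B υ a p μ t 0) + ∑' n : ℕ, Real.exp (B υ a p μ t (n+1)) := by
    rw [expE_eq hυ ha0 hp0 μ t]
    exact Summable.tsum_eq_zero_add hsum
  have hterm0 : Real.exp (B υ a p μ t 0) ≤ Real.exp (E υ a t p μ) * (1/5) := by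
    calc Real.exp (B υ a p μ t 0)
        ≤ Real.exp (E υ a t p μ) * Real.exp (-(p/32)) :=
          exp_B_le hυ ha0 hp0 hmax 0 (gauss_zero hp0 h1)
      _ ≤ Real.exp (E υ a t p μ) * (1/5) :=
          mul_le_mul_of_nonneg_left (exp32_le hp) hexpV.le
  have htermn : ∀ n : ℕ, Real.exp (B υ a p μ t (n+1))
      ≤ (Real.exp (E υ a t p μ) * (1/5)) * (1/2)^n := by
    intro n
    calc Real.exp (B υ a p μ t (n+1))
        ≤ Real.exp (E υ a t p μ) * Real.exp (-(p/32 + n*(p/4))) :=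
          exp_B_le hυ ha0 hp0 hmax (n+1) (gauss_tail hp0 h2 n)
      _ ≤ Real.exp (E υ a t p μ) * ((1/5) * (1/2)^n) :=
          mul_le_mul_of_nonneg_left (exp_split hp n) hexpV.le
      _ = (Real.exp (E υ a t p μ) * (1/5)) * (1/2)^n := by ring
  have htail : (∑' n : ℕ, Real.exp (B υ a p μ t (n+1)))
      ≤ ∑' n : ℕ, (Real.exp (E υ a t p μ) * (1/5)) * (1/2)^n := by
    apply Summable.tsum_le_tsum htermn ((summable_nat_add_iff 1).2 hsum)
    exact (summable_geometric_of_lt_one (by norm_num) (by norm_num)).mul_left _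
  have hgeo : (∑' n : ℕ, (Real.exp (E υ a t p μ) * (1/5)) * (1/2:ℝ)^n)
      = (Real.exp (E υ a t p μ) * (1/5)) * 2 := by
    rw [tsum_mul_left, tsum_geometric_of_lt_one (by norm_num) (by norm_num)]
    norm_num
  rw [hgeo] at htail
  nlinarith

/-- for `μ` large, no maximizer left of `p/4` -/
lemma no_max_left (hυ : 0 < υ) (ha : 1 < a) (hp : 150 ≤ p)
    (hμ : (a-1)*p/2 + 2 - Real.log υ ≤ μ)
    (hmax : ∀ y, E υ a y p μ ≤ E υ a t p μ) (ht : t ≤ p/4) : False := by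
  have ha0 : (0:ℝ) < a := by linarith
  have hp0 : (0:ℝ) < p := by linarith
  have hexpV : (0:ℝ) < Real.exp (E υ a t p μ) := Real.exp_pos _
  have hsum := summable_expB hυ ha0 hp0 μ t
  have hsplit : Real.exp (E υ a t p μ)
      = Real.exp (B υ a p μ t 0) + ∑' n : ℕ, Real.exp (B υ a p μ t (n+1)) := by
    rw [expE_eq hυ ha0 hp0 μ t]
    exact Summable.tsum_eq_zero_add hsum
  -- n = 0 term is at most 1
  have hterm0 : Real.exp (B υ a p μ t 0) ≤ 1 := by
    have hB0 : B υ a p μ t 0 ≤ 0 := by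
      have : B υ a p μ t 0 = -((t - 0*p)^2/(2*p)) := by
        simp [B]
      rw [this]
      apply neg_nonpos_of_nonneg
      positivity
    calc Real.exp (B υ a p μ t 0) ≤ Real.exp 0 := Real.exp_le_exp.2 hB0
      _ = 1 := Real.exp_zero
  -- tail bound as in the middle case (t ≤ p/4 ≤ 3p/4)
  have htermn : ∀ n : ℕ, Real.exp (B υ a p μ t (n+1))
      ≤ (Real.exp (E υ a t p μ) * (1/5)) * (1/2)^n := by
    intro n
    calc Real.exp (B υ a p μ t (n+1))
        ≤ Real.exp (E υ a t p μ) * Real.exp (-(p/32 + n*(p/4))) :=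
          exp_B_le hυ ha0 hp0 hmax (n+1) (gauss_tail hp0 (by linarith) n)
      _ ≤ Real.exp (E υ a t p μ) * ((1/5) * (1/2)^n) :=
          mul_le_mul_of_nonneg_left (exp_split hp n) hexpV.le
      _ = (Real.exp (E υ a t p μ) * (1/5)) * (1/2)^n := by ring
  have htail : (∑' n : ℕ, Real.exp (B υ a p μ t (n+1)))
      ≤ ∑' n : ℕ, (Real.exp (E υ a t p μ) * (1/5)) * (1/2)^n := by
    apply Summable.tsum_le_tsum htermn ((summable_nat_add_iff 1).2 hsum)
    exact (summable_geometric_of_lt_one (by norm_num) (by norm_num)).mul_left _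
  have hgeo : (∑' n : ℕ, (Real.exp (E υ a t p μ) * (1/5)) * (1/2:ℝ)^n)
      = (Real.exp (E υ a t p μ) * (1/5)) * 2 := by
    rw [tsum_mul_left, tsum_geometric_of_lt_one (by norm_num) (by norm_num)]
    norm_num
  rw [hgeo] at htail
  -- the phase-1 value is at least e², which is ≥ 3
  have hphase1 : (3:ℝ) ≤ Real.exp (E υ a t p μ) := by
    have h1 := hV_ge hυ ha0 hp0 hmax 1
    have heq : B υ a p μ (((1:ℕ):ℝ) * p) 1 = μ + Real.log υ - (a-1)*p/2 := by
      simp [B]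
    have hB1 : (2:ℝ) ≤ B υ a p μ (((1:ℕ):ℝ) * p) 1 := by
      rw [heq]; linarith
    have h3 : (3:ℝ) ≤ Real.exp (B υ a p μ (((1:ℕ):ℝ) * p) 1) := by
      have := Real.add_one_le_exp (2:ℝ)
      calc (3:ℝ) ≤ Real.exp 2 := by linarith
        _ ≤ _ := Real.exp_le_exp.2 hB1
    linarith
  nlinarith

/-- for `μ` small, no maximizer right of `p/4` -/
lemma no_max_right (hυ : 0 < υ) (ha : 1 < a) (hp : 150 ≤ p)
    (hμ : μ ≤ -Real.log υ - 2)
    (hmax : ∀ y, E υ a y p μ ≤ E υ a t p μ) (ht : p/4 ≤ t) : False := by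
  have ha0 : (0:ℝ) < a := by linarith
  have hp0 : (0:ℝ) < p := by linarith
  have hV1 : 1 ≤ Real.exp (E υ a t p μ) := hV_one hυ ha0 hp0 hmax
  have hsum := summable_expB hυ ha0 hp0 μ t
  have hsplit : Real.exp (E υ a t p μ)
      = Real.exp (B υ a p μ t 0) + ∑' n : ℕ, Real.exp (B υ a p μ t (n+1)) := by
    rw [expE_eq hυ ha0 hp0 μ t]
    exact Summable.tsum_eq_zero_add hsum
  have hterm0 : Real.exp (B υ a p μ t 0) ≤ 1/5 := by
    have hB0 : B υ a p μ t 0 ≤ -(p/32) := by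
      have heq : B υ a p μ t 0 = -((t - ((0:ℕ):ℝ)*p)^2/(2*p)) := by
        simp [B]
      have := gauss_zero hp0 ht
      rw [heq]
      linarith
    calc Real.exp (B υ a p μ t 0) ≤ Real.exp (-(p/32)) := Real.exp_le_exp.2 hB0
      _ ≤ 1/5 := exp32_le hp
  have htermn : ∀ n : ℕ, Real.exp (B υ a p μ t (n+1)) ≤ (1/3) * (1/3)^n := by
    intro n
    have hBle : B υ a p μ t (n+1) ≤ B υ a p μ (((n+1:ℕ):ℝ) * p) (n+1) := by
      rw [B_split]
      have : (0:ℝ) ≤ (t - ((n+1:ℕ):ℝ)*p)^2/(2*p) := by positivity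
      push_cast
      push_cast at this
      linarith
    have hfac : (1:ℝ) ≤ ((Nat.factorial (n+1) : ℕ) : ℝ) := by
      exact_mod_cast Nat.one_le_iff_ne_zero.2 (Nat.factorial_ne_zero (n+1))
    have hlogfac : 0 ≤ Real.log ((Nat.factorial (n+1) : ℕ) : ℝ) := Real.log_nonneg hfac
    have hq : (0:ℝ) ≤ ((a-1)*p/2) * (((n+1:ℕ)):ℝ)^2 := by
      have h1 : (0:ℝ) ≤ (a-1)*p/2 := by nlinarith
      positivity
    have hBh : B υ a p μ (((n+1:ℕ):ℝ) * p) (n+1) ≤ ((n+1:ℕ):ℝ) * (μ + Real.log υ) := by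
      unfold B
      have hz : ((((n+1:ℕ):ℝ) * p) - ((n+1:ℕ):ℝ) * p)^2/(2*p) = 0 := by
        simp
      push_cast
      push_cast at hz hq hlogfac
      nlinarith [hz]
    have hmu2 : ((n+1:ℕ):ℝ) * (μ + Real.log υ) ≤ -2*((n:ℝ)+1) := by
      have h1 : μ + Real.log υ ≤ -2 := by linarith
      have h2 : (0:ℝ) < ((n+1:ℕ):ℝ) := by positivity
      push_cast
      push_cast at h2
      nlinarith
    have hexp : Real.exp (B υ a p μ t (n+1)) ≤ Real.exp (-2*((n:ℝ)+1)) := by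
      apply Real.exp_le_exp.2
      calc B υ a p μ t (n+1) ≤ B υ a p μ (((n+1:ℕ):ℝ) * p) (n+1) := hBle
        _ ≤ ((n+1:ℕ):ℝ) * (μ + Real.log υ) := hBh
        _ ≤ -2*((n:ℝ)+1) := hmu2
    have heq2 : Real.exp (-2*((n:ℝ)+1)) = Real.exp (-2:ℝ) * (Real.exp (-2:ℝ))^n := by
      rw [← Real.exp_nat_mul, ← Real.exp_add]
      congr 1
      ring
    calc Real.exp (B υ a p μ t (n+1)) ≤ Real.exp (-2*((n:ℝ)+1)) := hexp
      _ = Real.exp (-2:ℝ) * (Real.exp (-2:ℝ))^n := heq2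
      _ ≤ (1/3) * (1/3)^n := by
          apply mul_le_mul exp2_le _ (by positivity) (by norm_num)
          apply pow_le_pow_left₀ (Real.exp_nonneg _) exp2_le
  have htail : (∑' n : ℕ, Real.exp (B υ a p μ t (n+1))) ≤ ∑' n : ℕ, (1/3) * (1/3:ℝ)^n := by
    apply Summable.tsum_le_tsum htermn ((summable_nat_add_iff 1).2 hsum)
    exact (summable_geometric_of_lt_one (by norm_num) (by norm_num)).mul_left _
  have hgeo : (∑' n : ℕ, (1/3) * (1/3:ℝ)^n) = 1/2 := by
    rw [tsum_mul_left, tsum_geometric_of_lt_one (by norm_num) (by norm_num)]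
    norm_num
  rw [hgeo] at htail
  linarith


end Regions
end PC

namespace PC
open Real Filter
lemma max_limit {υ a p : ℝ} (hυ : 0 < υ) (ha0 : 0 < a) (hp0 : 0 < p) {μc ybar : ℝ}
    {μseq tseq : ℕ → ℝ}
    (hμt : Tendsto μseq atTop (nhds μc)) (htt : Tendsto tseq atTop (nhds ybar))
    (hm : ∀ k y, E υ a y p (μseq k) ≤ E υ a (tseq k) p (μseq k)) :
    ∀ y, E υ a y p μc ≤ E υ a ybar p μc := by
  intro y
  have hcont := continuous_E2 (υ := υ) (a := a) (p := p) hυ ha0 hp0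
  have hL : Tendsto (fun k => E υ a y p (μseq k)) atTop (nhds (E υ a y p μc)) := by
    have h2 := (hcont.tendsto (y, μc)).comp
      ((tendsto_const_nhds : Tendsto (fun _ : ℕ => y) atTop (nhds y)).prodMk_nhds hμt)
    simp only [Function.comp_def] at h2
    exact h2
  have hR : Tendsto (fun k => E υ a (tseq k) p (μseq k)) atTop
      (nhds (E υ a ybar p μc)) := by
    have h2 := (hcont.tendsto (ybar, μc)).comp (htt.prodMk_nhds hμt)
    simp only [Function.comp_def] at h2
    exact h2
  exact le_of_tendsto_of_tendsto' hL hR (fun k => hm k y)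

end PC

open PC Filter in
theorem stmt_1 (υ a : ℝ) (hυ : 0 < υ) (ha : 1 < a) :
    ∃ p₁ > (0 : ℝ), ∀ p : ℝ, p₁ ≤ p → ∃ μc ybar₁ ybar₂ : ℝ,
      ybar₁ ≠ ybar₂ ∧
      E υ a ybar₁ p μc = E υ a ybar₂ p μc ∧
      (∀ y : ℝ, E υ a y p μc ≤ E υ a ybar₁ p μc) := by
  refine ⟨150, by norm_num, fun p hp => ?_⟩
  have ha0 : (0:ℝ) < a := by linarith
  have hp0 : (0:ℝ) < p := by linarith
  -- the set of chemical potentials with a "gas-type" maximizer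
  set S : Set ℝ := {μ | ∃ t, t ≤ p/4 ∧ ∀ y, E υ a y p μ ≤ E υ a t p μ} with hS
  have hSne : S.Nonempty := by
    obtain ⟨t, hmax⟩ := exists_max hυ ha hp0 (-Real.log υ - 2)
    refine ⟨-Real.log υ - 2, t, ?_, hmax⟩
    by_contra hcon
    push_neg at hcon
    exact no_max_right hυ ha hp (le_refl _) hmax (by linarith)
  have hSbdd : BddAbove S := by
    refine ⟨(a-1)*p/2 + 2 - Real.log υ, fun μ hμ => ?_⟩
    obtain ⟨t, ht, hmax⟩ := hμ
    by_contra hcon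
    push_neg at hcon
    exact no_max_left hυ ha hp (le_of_lt hcon) hmax ht
  set μc := sSup S with hμc
  -- uniform bound on maximizers for μ' near μc
  set Rb := Real.sqrt (Bd υ a p ((|μc|+1)^2)) with hRb
  have hbound : ∀ μ' t', μc - 1 ≤ μ' → μ' ≤ μc + 1 →
      (∀ y, E υ a y p μ' ≤ E υ a t' p μ') → |t'| ≤ Rb := by
    intro μ' t' h1 h2 hmax
    have hE : 0 ≤ E υ a t' p μ' := le_trans (E_zero_nonneg hυ ha0 hp0 μ') (hmax 0)
    have hsq := sq_le_Bd hυ ha hp0 hE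
    have habs : |μ'| ≤ |μc| + 1 := by
      rw [abs_le]
      constructor
      · linarith [neg_abs_le μc]
      · linarith [le_abs_self μc]
    have hsq2 : μ'^2 ≤ (|μc|+1)^2 := by
      rw [← sq_abs μ']
      apply pow_le_pow_left₀ (abs_nonneg _) habs
    have hsq3 : t'^2 ≤ Bd υ a p ((|μc|+1)^2) := le_trans hsq (Bd_mono hυ ha hp0 hsq2)
    rw [hRb]
    rw [← Real.sqrt_sq_eq_abs]
    exact Real.sqrt_le_sqrt hsq3
  -- Sequence from the left: gas-type maximizers converging to a maximizer `y1 ≤ p/4` at μc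
  have hex1 : ∀ k : ℕ, ∃ μ' t', μc - 1/((k:ℝ)+1) < μ' ∧ μ' ≤ μc ∧ t' ≤ p/4 ∧
      |t'| ≤ Rb ∧ ∀ y, E υ a y p μ' ≤ E υ a t' p μ' := by
    intro k
    have hk1 : (0:ℝ) < 1/((k:ℝ)+1) := by positivity
    have h1 : μc - 1/((k:ℝ)+1) < μc := by linarith
    obtain ⟨μ', hmemS, hgt⟩ := exists_lt_of_lt_csSup hSne h1
    have hμ'le : μ' ≤ μc := le_csSup hSbdd hmemS
    obtain ⟨t', ht'le, hmax'⟩ := hmemS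
    have hk2 : 1/((k:ℝ)+1) ≤ 1 := by
      rw [div_le_one (by positivity)]
      have : (0:ℝ) ≤ (k:ℝ) := Nat.cast_nonneg k
      linarith
    exact ⟨μ', t', hgt, hμ'le, ht'le,
      hbound μ' t' (by linarith) (by linarith) hmax', hmax'⟩
  choose μs ts hμs1 hμs2 hts1 hts2 hmaxs using hex1
  have hμstend : Tendsto μs atTop (nhds μc) := by
    have hlow : Tendsto (fun k : ℕ => μc - 1/((k:ℝ)+1)) atTop (nhds μc) := by
      have : Tendsto (fun n : ℕ => 1 / ((n : ℝ) + 1)) atTop (nhds 0) :=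
        tendsto_one_div_add_atTop_nhds_zero_nat
      have h2 := Tendsto.sub
        (tendsto_const_nhds : Tendsto (fun _ : ℕ => μc) atTop (nhds μc)) this
      simpa using h2
    exact tendsto_of_tendsto_of_tendsto_of_le_of_le hlow tendsto_const_nhds
      (fun k => (hμs1 k).le) hμs2
  have htsmem : ∀ k, ts k ∈ Set.Icc (-Rb) (p/4) := by
    intro k
    exact ⟨by linarith [neg_abs_le (ts k), hts2 k], hts1 k⟩
  obtain ⟨y1, hy1mem, φ, hφmono, hφtend⟩ :=
    (isCompact_Icc (a := -Rb) (b := p/4)).tendsto_subseq htsmem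
  have hμφtend : Tendsto (fun k => μs (φ k)) atTop (nhds μc) :=
    hμstend.comp (hφmono.tendsto_atTop)
  have hy1max : ∀ y, E υ a y p μc ≤ E υ a y1 p μc :=
    max_limit hυ ha0 hp0 hμφtend hφtend (fun k y => hmaxs (φ k) y)
  -- Sequence from the right: liquid-type maximizers converging to `y2 ≥ 3p/4` at μc
  have hex2 : ∀ k : ℕ, ∃ ν t', μc < ν ∧ ν ≤ μc + 1/((k:ℝ)+1) ∧ 3*p/4 ≤ t' ∧ |t'| ≤ Rb ∧
      ∀ y, E υ a y p ν ≤ E υ a t' p ν := by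
    intro k
    have hk1 : (0:ℝ) < 1/((k:ℝ)+1) := by positivity
    have hk2 : 1/((k:ℝ)+1) ≤ 1 := by
      rw [div_le_one (by positivity)]
      have : (0:ℝ) ≤ (k:ℝ) := Nat.cast_nonneg k
      linarith
    obtain ⟨t', hmax'⟩ := exists_max hυ ha hp0 (μc + 1/((k:ℝ)+1))
    have hνnotS : (μc + 1/((k:ℝ)+1)) ∉ S := by
      intro hmem
      have := le_csSup hSbdd hmem
      linarith
    have ht'1 : ¬ (t' ≤ p/4) := by
      intro hcon
      exact hνnotS ⟨t', hcon, hmax'⟩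
    push_neg at ht'1
    have ht'2 : ¬ (t' ≤ 3*p/4) := by
      intro hcon
      exact no_max_middle hυ ha hp hmax' ht'1.le hcon
    push_neg at ht'2
    exact ⟨μc + 1/((k:ℝ)+1), t', by linarith, le_refl _, ht'2.le,
      hbound _ t' (by linarith) (by linarith) hmax', hmax'⟩
  choose νs ts' hνs1 hνs2 hts'1 hts'2 hmaxs' using hex2
  have hνtend : Tendsto νs atTop (nhds μc) := by
    have hup : Tendsto (fun k : ℕ => μc + 1/((k:ℝ)+1)) atTop (nhds μc) := by
      have : Tendsto (fun n : ℕ => 1 / ((n : ℝ) + 1)) atTop (nhds 0) :=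
        tendsto_one_div_add_atTop_nhds_zero_nat
      have h2 := Tendsto.add
        (tendsto_const_nhds : Tendsto (fun _ : ℕ => μc) atTop (nhds μc)) this
      simpa using h2
    exact tendsto_of_tendsto_of_tendsto_of_le_of_le tendsto_const_nhds hup
      (fun k => (hνs1 k).le) hνs2
  have hts'mem : ∀ k, ts' k ∈ Set.Icc (3*p/4) Rb := by
    intro k
    exact ⟨hts'1 k, by linarith [le_abs_self (ts' k), hts'2 k]⟩
  obtain ⟨y2, hy2mem, ψ, hψmono, hψtend⟩ :=
    (isCompact_Icc (a := 3*p/4) (b := Rb)).tendsto_subseq hts'mem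
  have hνψtend : Tendsto (fun k => νs (ψ k)) atTop (nhds μc) :=
    hνtend.comp (hψmono.tendsto_atTop)
  have hy2max : ∀ y, E υ a y p μc ≤ E υ a y2 p μc :=
    max_limit hυ ha0 hp0 hνψtend hψtend (fun k y => hmaxs' (ψ k) y)
  refine ⟨μc, y1, y2, ?_, ?_, hy1max⟩
  · have h1 : y1 ≤ p/4 := hy1mem.2
    have h2 : 3*p/4 ≤ y2 := hy2mem.1
    intro hcon
    rw [hcon] at h1
    linarith
  · exact le_antisymm (hy2max y1) (hy1max y2)
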